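/- Let f(x) = e^x/(1+e^x) be the logistic sigmoid. For real cut-points c_k < c_{k+1} and a real latent rating v, define P(k) = ∏_{q<k}(1 - f(c_q - v)) · f(c_k - v) and P(k+1) = ∏_{q<k}(1 - f(c_q - v)) · (1 - f(c_k - v)) · f(c_{k+1} - v). If v > c_k - ln(1 - e^{-(c_{k+1}-c_k)}), then P(k+1) > P(k). -/

import Mathlib

noncomputable def sigmoid (x : ℝ) : ℝ := Real.exp x / (1 + Real.exp x)

lemma sigmoid_lt_one (x : ℝ) : sigmoid x < 1 := by
  unfold sigmoid
  rw [div_lt_one (by positivity)]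
  linarith [Real.exp_pos x]

/-- Cut-point ordering lemma: if `v > c k - ln(1 - e^{-(c (k + 1) - c k)})` then
`P(k+1) > P(k)` for the logistic stick-breaking probabilities. -/
theorem stmt_0 (c : ℕ → ℝ) (k : ℕ) (v : ℝ) (hc : c k < c (k + 1))
    (hv : v > c k - Real.log (1 - Real.exp (-(c (k + 1) - c k)))) :
    (∏ q ∈ Finset.range k, (1 - sigmoid (c q - v))) *
        ((1 - sigmoid (c k - v)) * sigmoid (c (k + 1) - v)) >
      (∏ q ∈ Finset.range k, (1 - sigmoid (c q - v))) * sigmoid (c k - v) := by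
  have hprod : 0 < ∏ q ∈ Finset.range k, (1 - sigmoid (c q - v)) := by
    apply Finset.prod_pos
    intro q _
    linarith [sigmoid_lt_one (c q - v)]
  apply mul_lt_mul_of_pos_left _ hprod
  set a := c k - v with ha
  set b := c (k + 1) - v with hb
  have hA : (0:ℝ) < Real.exp a := Real.exp_pos a
  have hB : (0:ℝ) < Real.exp b := Real.exp_pos b
  -- 1 - exp(-(Δ)) > 0
  have hd : (0:ℝ) < 1 - Real.exp (-(c (k + 1) - c k)) := by
    have : Real.exp (-(c (k + 1) - c k)) < 1 := by
      rw [Real.exp_lt_one_iff]; linarith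
    linarith
  -- hypothesis gives exp a < 1 - exp(-(Δ))
  have hkey : Real.exp a < 1 - Real.exp (-(c (k + 1) - c k)) := by
    have : a < Real.log (1 - Real.exp (-(c (k + 1) - c k))) := by
      rw [ha]; linarith
    calc Real.exp a < Real.exp (Real.log (1 - Real.exp (-(c (k + 1) - c k)))) :=
          Real.exp_lt_exp.mpr this
      _ = 1 - Real.exp (-(c (k + 1) - c k)) := Real.exp_log hd
  -- exp b * exp(-(Δ)) = exp a
  have hab : Real.exp b * Real.exp (-(c (k + 1) - c k)) = Real.exp a := by
    rw [← Real.exp_add]; congr 1; rw [ha, hb]; ring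
  have hmain : Real.exp a < Real.exp b * (1 - Real.exp a) := by
    have h1 : Real.exp (-(c (k + 1) - c k)) < 1 - Real.exp a := by linarith
    calc Real.exp a = Real.exp b * Real.exp (-(c (k + 1) - c k)) := hab.symm
      _ < Real.exp b * (1 - Real.exp a) := by
          exact mul_lt_mul_of_pos_left h1 hB
  unfold sigmoid
  rw [show (1 : ℝ) - Real.exp a / (1 + Real.exp a) = 1 / (1 + Real.exp a) by
    field_simp; ring]
  rw [div_mul_div_comm, one_mul, div_lt_div_iff₀ (by positivity) (by positivity)]
  nlinarith [mul_pos hA hB, hmain]
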